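/- Under the hypotheses that I - δG, I - δ(G+C), and I - δ M_{SS}(G) C_{SS} are invertible (where M(G) = (I - δG)^{-1} and C is supported on S×S), the restriction of the post-intervention equilibrium to S satisfies x̂*_S = (I - δ M_{SS}(G) C_{SS})^{-1} b_S(G, θ), where b(G,θ) = (I - δG)^{-1}θ. -/
import Mathlib

open Matrix

/-- The block of a matrix with rows in `S` and columns in `T`. -/
def blk {n : ℕ} (A : Matrix (Fin n) (Fin n) ℝ) (S T : Finset (Fin n)) :
    Matrix {x // x ∈ S} {x // x ∈ T} ℝ :=
  A.submatrix Subtype.val Subtype.val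

/-- Restriction of a vector to the coordinates in `S`. -/
def restr {n : ℕ} (v : Fin n → ℝ) (S : Finset (Fin n)) : {x // x ∈ S} → ℝ :=
  fun i => v i.val

theorem post_intervention_on_S {n : ℕ} (G C : Matrix (Fin n) (Fin n) ℝ) (δ : ℝ)
    (θ : Fin n → ℝ) (S : Finset (Fin n)) (hsymG : G.IsSymm) (hsymC : C.IsSymm)
    (hsupp : ∀ i j, (i ∉ S ∨ j ∉ S) → C i j = 0)
    (h1 : IsUnit (1 - δ • G)) (h2 : IsUnit (1 - δ • (G + C)))
    (h3 : IsUnit (1 - δ • (blk ((1 - δ • G)⁻¹) S S * blk C S S))) :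
    restr ((1 - δ • (G + C))⁻¹ *ᵥ θ) S
      = (1 - δ • (blk ((1 - δ • G)⁻¹) S S * blk C S S))⁻¹ *ᵥ restr ((1 - δ • G)⁻¹ *ᵥ θ) S := by
  set A : Matrix (Fin n) (Fin n) ℝ := 1 - δ • G with hA
  set B : Matrix (Fin n) (Fin n) ℝ := 1 - δ • (G + C) with hB
  set x : Fin n → ℝ := B⁻¹ *ᵥ θ with hx
  set M : Matrix {x // x ∈ S} {x // x ∈ S} ℝ := blk A⁻¹ S S * blk C S S with hM
  set D : Matrix {x // x ∈ S} {x // x ∈ S} ℝ := 1 - δ • M with hD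
  have hBx : B *ᵥ x = θ := by
    rw [hx, mulVec_mulVec, Matrix.mul_nonsing_inv _ ((Matrix.isUnit_iff_isUnit_det B).mp h2),
      one_mulVec]
  have hAx : A *ᵥ x = θ + δ • (C *ᵥ x) := by
    have hAB : A = B + δ • C := by
      rw [hA, hB, smul_add]; abel
    rw [hAB, add_mulVec, hBx, smul_mulVec]
  have hxeq : x = A⁻¹ *ᵥ θ + δ • ((A⁻¹ * C) *ᵥ x) := by
    have : A⁻¹ *ᵥ (A *ᵥ x) = x := by
      rw [mulVec_mulVec, Matrix.nonsing_inv_mul _ ((Matrix.isUnit_iff_isUnit_det A).mp h1),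
        one_mulVec]
    conv_lhs => rw [← this, hAx]
    rw [mulVec_add, mulVec_smul, mulVec_mulVec]
  have key : ∀ (i : {x // x ∈ S}), (M *ᵥ restr x S) i = ((A⁻¹ * C) *ᵥ x) i.val := by
    intro ⟨i, hi⟩
    simp only [mulVec, dotProduct, Matrix.mul_apply, hM, blk, restr, submatrix_apply]
    have e1 : ∀ j : Fin n, (∑ k : {x // x ∈ S}, A⁻¹ i k.val * C k.val j)
        = ∑ k : Fin n, A⁻¹ i k * C k j := by
      intro j
      rw [Finset.sum_coe_sort S (fun k => A⁻¹ i k * C k j)]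
      exact Finset.sum_subset (Finset.subset_univ S)
        (fun k _ hk => by rw [hsupp k j (Or.inl hk), mul_zero])
    calc (∑ j : {x // x ∈ S}, (∑ k : {x // x ∈ S}, A⁻¹ i k.val * C k.val j.val) * x j.val)
        = ∑ j : {x // x ∈ S}, (∑ k : Fin n, A⁻¹ i k * C k j.val) * x j.val := by
          exact Finset.sum_congr rfl fun j _ => by rw [e1]
      _ = ∑ j ∈ S, (∑ k : Fin n, A⁻¹ i k * C k j) * x j :=
          Finset.sum_coe_sort S (fun j => (∑ k : Fin n, A⁻¹ i k * C k j) * x j)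
      _ = ∑ j : Fin n, (∑ k : Fin n, A⁻¹ i k * C k j) * x j := by
          refine Finset.sum_subset (Finset.subset_univ S) fun j _ hj => ?_
          have hz : ∀ k, C k j = 0 := fun k => hsupp k j (Or.inr hj)
          simp [hz]
  have hDx : D *ᵥ restr x S = restr (A⁻¹ *ᵥ θ) S := by
    funext i
    have := congrFun hxeq i.val
    simp only [Pi.add_apply, Pi.smul_apply, smul_eq_mul] at this
    simp only [hD, sub_mulVec, one_mulVec, Pi.sub_apply, smul_mulVec, Pi.smul_apply,
      smul_eq_mul, key i, restr]
    linarith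
  calc restr x S = D⁻¹ *ᵥ (D *ᵥ restr x S) := by
        rw [mulVec_mulVec, Matrix.nonsing_inv_mul _ ((Matrix.isUnit_iff_isUnit_det D).mp h3),
          one_mulVec]
    _ = D⁻¹ *ᵥ restr (A⁻¹ *ᵥ θ) S := by rw [hDx]
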